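/- The cofree comonad functor c_− is lax monoidal with respect to the Dirichlet tensor product ⊗ on Poly: there are natural maps y → c_y and c_p ⊗ c_q → c_{p⊗q}, satisfying the unitality and associativity axioms of a lax monoidal functor. -/

import Mathlib

universe u

/-- A morphism of polynomial functors. -/
structure PolyHom (p q : PFunctor.{u, u}) : Type u where
  onPos : p.A → q.A
  onDir : ∀ a : p.A, q.B (onPos a) → p.B a

/-- Identity morphism. -/
def idHom (p : PFunctor.{u, u}) : PolyHom p p := ⟨fun a => a, fun _ d => d⟩

/-- Composition (diagrammatic order). -/
def composePoly {p q r : PFunctor.{u, u}} (φ : PolyHom p q) (ψ : PolyHom q r) : PolyHom p r :=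
  ⟨fun a => ψ.onPos (φ.onPos a), fun a d => φ.onDir a (ψ.onDir (φ.onPos a) d)⟩

/-- The functorial action of `◁` (composition of polynomials) on morphisms. -/
def compHom {p p' q q' : PFunctor.{u, u}} (φ : PolyHom p p') (ψ : PolyHom q q') :
    PolyHom (p.comp q) (p'.comp q') where
  onPos x := ⟨φ.onPos x.1, fun b => ψ.onPos (x.2 (φ.onDir x.1 b))⟩
  onDir x d := ⟨φ.onDir x.1 d.1, ψ.onDir _ d.2⟩

/-- The identity polynomial `y` (the unit for `◁`). -/
def yPoly : PFunctor.{u, u} := ⟨PUnit, fun _ => PUnit⟩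

/-- The left unitor `y ◁ p → p`. -/
def lunitHom (p : PFunctor.{u, u}) : PolyHom (yPoly.comp p) p where
  onPos x := x.2 PUnit.unit
  onDir x d := ⟨PUnit.unit, d⟩

/-- The right unitor `p ◁ y → p`. -/
def runitHom (p : PFunctor.{u, u}) : PolyHom (p.comp yPoly) p where
  onPos x := x.1
  onDir _ d := ⟨d, PUnit.unit⟩

/-- The associator `(p ◁ q) ◁ r → p ◁ (q ◁ r)`. -/
def compAssocHom (p q r : PFunctor.{u, u}) :
    PolyHom ((p.comp q).comp r) (p.comp (q.comp r)) where
  onPos x := ⟨x.1.1, fun b => ⟨x.1.2 b, fun c => x.2 ⟨b, c⟩⟩⟩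
  onDir x d := ⟨⟨d.1, d.2.1⟩, d.2.2⟩

/-- Finite paths from the root of a `q`-behavior tree (an element of the M-type `q.M`)
to one of its subtrees: the directions of the cofree comonad. -/
inductive MPath (p : PFunctor.{u, u}) : p.M → Type u
  | nil (t : p.M) : MPath p t
  | cons (a : p.A) (f : p.B a → p.M) (b : p.B a) :
      MPath p (f b) → MPath p (PFunctor.M.mk ⟨a, f⟩)

/-- The cofree comonad `c_q` on `q`, as a polynomial functor: positions are
`q`-behavior trees (the final coalgebra `q.M`), directions are finite paths. -/
def cofreePoly (q : PFunctor.{u, u}) : PFunctor.{u, u} := ⟨q.M, MPath q⟩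

/-- The subtree of a behavior tree at the end of a finite path. -/
def subtreeAt {q : PFunctor.{u, u}} : ∀ {t : q.M}, MPath q t → q.M
  | _, .nil t => t
  | _, .cons _ _ _ pth => subtreeAt pth

/-- Concatenation of paths. -/
def appendPath {q : PFunctor.{u, u}} :
    ∀ {t : q.M} (pth : MPath q t), MPath q (subtreeAt pth) → MPath q t
  | _, .nil _, s => s
  | _, .cons a f b pth, s => .cons a f b (appendPath pth s)

/-- The counit `ε : c_q → y` of the cofree comonad: the projection to `q^((0)) = y`,
sending the unique direction of `y` to the empty path. -/
def cofreeEps (q : PFunctor.{u, u}) : PolyHom (cofreePoly q) yPoly where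
  onPos _ := PUnit.unit
  onDir t _ := .nil t

/-- The comultiplication `δ : c_q → c_q ◁ c_q` of the cofree comonad: a behavior tree
is sent to itself together with all of its subtrees, and a pair of paths is sent to
their concatenation. -/
def cofreeDelta (q : PFunctor.{u, u}) :
    PolyHom (cofreePoly q) ((cofreePoly q).comp (cofreePoly q)) where
  onPos t := ⟨t, fun pth => subtreeAt pth⟩
  onDir t d := appendPath d.1 d.2

/-- The Dirichlet tensor product `p ⊗ q`: positions multiply and directions multiply. -/
def tensorPoly (p q : PFunctor.{u, u}) : PFunctor.{u, u} :=
  ⟨p.A × q.A, fun x => p.B x.1 × q.B x.2⟩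

/-- The action of `⊗` on morphisms. -/
def tensorHom {p p' q q' : PFunctor.{u, u}} (φ : PolyHom p p') (ψ : PolyHom q q') :
    PolyHom (tensorPoly p q) (tensorPoly p' q') where
  onPos x := (φ.onPos x.1, ψ.onPos x.2)
  onDir x d := (φ.onDir x.1 d.1, ψ.onDir x.2 d.2)

/-- The left unitor `y ⊗ p → p` for `⊗`. -/
def tLunitHom (p : PFunctor.{u, u}) : PolyHom (tensorPoly yPoly p) p :=
  ⟨fun x => x.2, fun _ d => (PUnit.unit, d)⟩

/-- The right unitor `p ⊗ y → p` for `⊗`. -/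
def tRunitHom (p : PFunctor.{u, u}) : PolyHom (tensorPoly p yPoly) p :=
  ⟨fun x => x.1, fun _ d => (d, PUnit.unit)⟩

/-- The inverse right unitor `p → p ⊗ y` for `⊗`. -/
def tRunitInvHom (p : PFunctor.{u, u}) : PolyHom p (tensorPoly p yPoly) :=
  ⟨fun a => (a, PUnit.unit), fun _ d => d.1⟩

/-- The associator `(p ⊗ q) ⊗ r → p ⊗ (q ⊗ r)` for `⊗`. -/
def tAssocHom (p q r : PFunctor.{u, u}) :
    PolyHom (tensorPoly (tensorPoly p q) r) (tensorPoly p (tensorPoly q r)) :=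
  ⟨fun x => (x.1.1, (x.1.2, x.2)), fun _ d => ((d.1, d.2.1), d.2.2)⟩

/-- The inverse associator `p ⊗ (q ⊗ r) → (p ⊗ q) ⊗ r` for `⊗`. -/
def tAssocInvHom (p q r : PFunctor.{u, u}) :
    PolyHom (tensorPoly p (tensorPoly q r)) (tensorPoly (tensorPoly p q) r) :=
  ⟨fun x => ((x.1, x.2.1), x.2.2), fun _ d => (d.1.1, (d.1.2, d.2))⟩

/-- The counit of the cofree-comonad adjunction: the projection `c_q → q` reading off
the root of a behavior tree. -/
def cofreeCounit (q : PFunctor.{u, u}) : PolyHom (cofreePoly q) q where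
  onPos t := (PFunctor.M.dest t).1
  onDir t b :=
    cast (congrArg (MPath q) (PFunctor.M.mk_dest t))
      (MPath.cons (PFunctor.M.dest t).1 (PFunctor.M.dest t).2 b
        (MPath.nil ((PFunctor.M.dest t).2 b)))

namespace CofreeLax

open PFunctor

universe v

variable {p q r : PFunctor.{u, u}}

theorem PolyHom.ext' {p q : PFunctor.{u, u}} {φ ψ : PolyHom p q}
    (h1 : ∀ a, φ.onPos a = ψ.onPos a)
    (h2 : ∀ a (d : q.B (φ.onPos a)) (d' : q.B (ψ.onPos a)), HEq d d' →
        φ.onDir a d = ψ.onDir a d') :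
    φ = ψ := by
  obtain ⟨P1, D1⟩ := φ
  obtain ⟨P2, D2⟩ := ψ
  obtain rfl : P1 = P2 := funext h1
  have : D1 = D2 := by
    funext a d
    exact h2 a d d HEq.rfl
  rw [this]

theorem objEq {γ : Type u} {x y : p.Obj γ} (h : x = y) (b : p.B x.1) :
    x.2 b = y.2 (cast (congrArg p.B (congrArg Sigma.fst h)) b) := by
  subst h; rfl

theorem castRound {α β : Sort v} (e : α = β) (b : β) : cast e (cast e.symm b) = b := by
  subst e; rfl

theorem cast_eq_of_heq {α β : Sort v} (e : α = β) {x : α} {y : β} (h : HEq x y) :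
    cast e x = y := by
  subst e; exact eq_of_heq h

theorem sigmaCast' {a x : p.A} (h : x = a) (e : p.B a = p.B x) (b : p.B a) :
    (⟨x, cast e b⟩ : Σ c : p.A, p.B c) = ⟨a, b⟩ := by
  subst h; rw [cast_eq]

/-- functorial action of the behaviour-tree construction. -/
def mapM (f : PolyHom p q) : p.M → q.M :=
  M.corec fun t => ⟨f.onPos (M.dest t).1, fun b => (M.dest t).2 (f.onDir _ b)⟩

theorem dest_mapM (f : PolyHom p q) (t : p.M) :
    M.dest (mapM f t) =
      ⟨f.onPos (M.dest t).1, fun b => mapM f ((M.dest t).2 (f.onDir _ b))⟩ := by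
  rw [mapM]; erw [M.dest_corec]; rfl

/-- zipping of behaviour trees. -/
def zipM (s : p.M) (t : q.M) : (tensorPoly p q).M :=
  M.corec (fun x : p.M × q.M =>
    ⟨((M.dest x.1).1, (M.dest x.2).1),
      fun b => ((M.dest x.1).2 b.1, (M.dest x.2).2 b.2)⟩) (s, t)

theorem dest_zipM (s : p.M) (t : q.M) :
    M.dest (zipM s t) =
      ⟨((M.dest s).1, (M.dest t).1),
        fun b => zipM ((M.dest s).2 b.1) ((M.dest t).2 b.2)⟩ := by
  rw [zipM]; erw [M.dest_corec]; rfl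

/-- the canonical behaviour tree for `y`. -/
def theTree : yPoly.{u}.M :=
  M.corec (fun _ : PUnit.{u + 1} =>
    (⟨PUnit.unit, fun _ => PUnit.unit⟩ : yPoly.{u}.Obj PUnit.{u + 1})) PUnit.unit

/-- the list of steps of a path. -/
def toList : ∀ {t : p.M}, MPath p t → List (Σ a : p.A, p.B a)
  | _, .nil _ => []
  | _, .cons a _ b pth => ⟨a, b⟩ :: toList pth

theorem toList_heq {t t' : p.M} (h : t = t') {d : MPath p t} {d' : MPath p t'}
    (hd : HEq d d') : toList d = toList d' := by
  subst h; cases hd; rfl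

theorem toList_inj' : ∀ {t : p.M} (d : MPath p t) {t' : p.M} (d' : MPath p t'),
    t = t' → toList d = toList d' → HEq d d' := by
  intro t d
  induction d with
  | nil t =>
    intro t' d' ht h
    cases d' with
    | nil => subst ht; rfl
    | cons a f b pth => simp [toList] at h
  | cons a f b pth ih =>
    intro t' d' ht h
    cases d' with
    | nil => simp [toList] at h
    | cons a' f' b' pth' =>
      have h2 := M.mk_inj ht
      injection h2 with ha hf
      subst ha
      obtain rfl := eq_of_heq hf
      simp only [toList, List.cons.injEq] at h
      obtain ⟨hb, hl⟩ := h
      injection hb with _ hb'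
      subst hb'
      exact heq_of_eq (congrArg _ (eq_of_heq (ih pth' rfl hl)))

theorem toList_inj {t : p.M} {d d' : MPath p t} (h : toList d = toList d') : d = d' :=
  eq_of_heq (toList_inj' d d' rfl h)

end CofreeLax

namespace CofreeLax
open PFunctor
variable {p q r p' q' : PFunctor.{u, u}}

/-- validity of a list of steps with respect to a tree. -/
inductive Valid (p : PFunctor.{u, u}) : p.M → List (Σ a : p.A, p.B a) → Prop
  | nil (t : p.M) : Valid p t []
  | cons {t : p.M} {a : p.A} {g : p.B a → p.M} (b : p.B a) {l : List (Σ a : p.A, p.B a)}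
      (h : M.dest t = ⟨a, g⟩) : Valid p (g b) l → Valid p t (⟨a, b⟩ :: l)

theorem toList_valid : ∀ {t : p.M} (d : MPath p t), Valid p t (toList d)
  | _, .nil t => .nil t
  | _, .cons a f b pth => .cons b (M.dest_mk _) (toList_valid pth)

/-- cons for paths, phrased via `dest`. -/
def consPath (t : p.M) (b : p.B (M.dest t).1) (pth : MPath p ((M.dest t).2 b)) : MPath p t :=
  cast (congrArg (MPath p) (M.mk_dest t)) (.cons (M.dest t).1 (M.dest t).2 b pth)

theorem toList_consPath (t : p.M) (b : p.B (M.dest t).1) (pth : MPath p ((M.dest t).2 b)) :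
    toList (consPath t b pth) = ⟨(M.dest t).1, b⟩ :: toList pth :=
  toList_heq (M.mk_dest t).symm (cast_heq _ _)

theorem counit_onDir (t : q.M) (b : q.B (M.dest t).1) :
    (cofreeCounit q).onDir t b = consPath t b (.nil _) := rfl

section lift
variable (f : PolyHom p q)

theorem liftObj {t : p.M} {a : q.A} {g : q.B a → q.M} (h : mapM f t = M.mk ⟨a, g⟩) :
    (⟨f.onPos (M.dest t).1, fun b => mapM f ((M.dest t).2 (f.onDir _ b))⟩ : q.Obj q.M)
      = ⟨a, g⟩ :=
  (dest_mapM f t).symm.trans (by rw [h]; exact M.dest_mk _)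

theorem liftHead {t : p.M} {a : q.A} {g : q.B a → q.M} (h : mapM f t = M.mk ⟨a, g⟩) :
    f.onPos (M.dest t).1 = a :=
  congrArg Sigma.fst (liftObj f h)

theorem liftTail {t : p.M} {a : q.A} {g : q.B a → q.M} (h : mapM f t = M.mk ⟨a, g⟩)
    (b : q.B a) :
    mapM f ((M.dest t).2 (f.onDir _ (cast (congrArg q.B (liftHead f h)).symm b))) = g b :=
  (objEq (liftObj f h) _).trans (congrArg g (castRound _ b))

/-- lifting a path along `mapM`. -/
def liftPath : ∀ {s : q.M}, MPath q s → ∀ t : p.M, mapM f t = s → MPath p t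
  | _, .nil _, t, _ => .nil t
  | _, .cons _ _ b pth, t, h =>
    consPath t (f.onDir _ (cast (congrArg q.B (liftHead f h)).symm b))
      (liftPath pth _ (liftTail f h b))

open Classical in
/-- list-level version of `liftPath`, destructured form. -/
noncomputable def liftListGo : p.Obj p.M → List (Σ a : q.A, q.B a) → List (Σ a : p.A, p.B a)
  | _, [] => []
  | z, ⟨a, b⟩ :: l =>
    if h : f.onPos z.1 = a then
      ⟨z.1, f.onDir _ (cast (congrArg q.B h).symm b)⟩ ::
        liftListGo (M.dest (z.2 (f.onDir _ (cast (congrArg q.B h).symm b)))) l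
    else []

/-- list-level version of `liftPath`. -/
noncomputable def liftList (t : p.M) (l : List (Σ a : q.A, q.B a)) :
    List (Σ a : p.A, p.B a) :=
  liftListGo f (M.dest t) l

theorem toList_liftPath : ∀ {s : q.M} (pth : MPath q s) (t : p.M) (h : mapM f t = s),
    toList (liftPath f pth t h) = liftList f t (toList pth)
  | _, .nil _, t, h => rfl
  | _, .cons a g b pth, t, h => by
    rw [liftPath, toList_consPath]
    simp only [toList, liftList, liftListGo]
    rw [dif_pos (liftHead f h)]
    exact congrArg _ (toList_liftPath pth _ _)

end lift

section split

theorem zipObj {s : p.M} {t : q.M} {a : (tensorPoly p q).A}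
    {g : (tensorPoly p q).B a → (tensorPoly p q).M} (h : zipM s t = M.mk ⟨a, g⟩) :
    (⟨((M.dest s).1, (M.dest t).1), fun b => zipM ((M.dest s).2 b.1) ((M.dest t).2 b.2)⟩
      : (tensorPoly p q).Obj (tensorPoly p q).M) = ⟨a, g⟩ :=
  (dest_zipM s t).symm.trans (by rw [h]; exact M.dest_mk _)

theorem zipHead {s : p.M} {t : q.M} {a : (tensorPoly p q).A}
    {g : (tensorPoly p q).B a → (tensorPoly p q).M} (h : zipM s t = M.mk ⟨a, g⟩) :
    ((M.dest s).1, (M.dest t).1) = a :=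
  congrArg Sigma.fst (zipObj h)

theorem zipTail {s : p.M} {t : q.M} {a : (tensorPoly p q).A}
    {g : (tensorPoly p q).B a → (tensorPoly p q).M} (h : zipM s t = M.mk ⟨a, g⟩)
    (b : (tensorPoly p q).B a) :
    zipM ((M.dest s).2 (cast (congrArg (tensorPoly p q).B (zipHead h)).symm b).1)
        ((M.dest t).2 (cast (congrArg (tensorPoly p q).B (zipHead h)).symm b).2) = g b :=
  (objEq (zipObj h) _).trans (congrArg g (castRound _ b))

/-- splitting a path in a zipped tree. -/
def splitPath : ∀ {w : (tensorPoly p q).M}, MPath (tensorPoly p q) w →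
    ∀ (s : p.M) (t : q.M), zipM s t = w → MPath p s × MPath q t
  | _, .nil _, s, t, _ => (.nil s, .nil t)
  | _, .cons _ _ b pth, s, t, h =>
    let rest := splitPath pth
      ((M.dest s).2 (cast (congrArg (tensorPoly p q).B (zipHead h)).symm b).1)
      ((M.dest t).2 (cast (congrArg (tensorPoly p q).B (zipHead h)).symm b).2)
      (zipTail h b)
    (consPath s (cast (congrArg (tensorPoly p q).B (zipHead h)).symm b).1 rest.1,
      consPath t (cast (congrArg (tensorPoly p q).B (zipHead h)).symm b).2 rest.2)

theorem toList_splitPath {w : (tensorPoly p q).M} (pth : MPath (tensorPoly p q) w) :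
    ∀ (s : p.M) (t : q.M) (h : zipM s t = w),
    toList (splitPath pth s t h).1 = (toList pth).map (fun x => ⟨x.1.1, x.2.1⟩) ∧
    toList (splitPath pth s t h).2 = (toList pth).map (fun x => ⟨x.1.2, x.2.2⟩) := by
  induction pth with
  | nil => exact fun s t h => ⟨rfl, rfl⟩
  | cons a g b pth ih =>
    intro s t h
    obtain rfl : a = ((M.dest s).1, (M.dest t).1) := (zipHead h).symm
    constructor
    · erw [splitPath, toList_consPath, toList, List.map_cons]
      exact congrArg₂ _ (by rw [cast_eq]) (ih _ _ _).1
    · erw [splitPath, toList_consPath, toList, List.map_cons]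
      exact congrArg₂ _ (by rw [cast_eq]) (ih _ _ _).2

end split
end CofreeLax

namespace CofreeLax
open PFunctor
variable {p q r p' q' : PFunctor.{u, u}}

theorem mapM_id (t : p.M) : mapM (idHom p) t = t := by
  refine M.bisim (fun x y => x = mapM (idHom p) y) ?_ _ _ rfl
  rintro x y rfl
  exact ⟨(M.dest y).1, fun b => mapM (idHom p) ((M.dest y).2 b), (M.dest y).2,
    dest_mapM _ _, rfl, fun _ => rfl⟩

theorem mapM_comp (f : PolyHom p q) (g : PolyHom q r) (t : p.M) :
    mapM (composePoly f g) t = mapM g (mapM f t) := by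
  refine M.bisim (fun x y => ∃ t, x = mapM (composePoly f g) t ∧ y = mapM g (mapM f t))
    ?_ _ _ ⟨t, rfl, rfl⟩
  rintro x y ⟨t, rfl, rfl⟩
  refine ⟨g.onPos (f.onPos (M.dest t).1),
    fun b => mapM (composePoly f g) ((M.dest t).2 (f.onDir _ (g.onDir _ b))),
    fun b => mapM g (mapM f ((M.dest t).2 (f.onDir _ (g.onDir _ b)))),
    dest_mapM _ _, ?_, fun b => ⟨_, rfl, rfl⟩⟩
  rw [dest_mapM, dest_mapM] <;> rfl

theorem zip_natural (f : PolyHom p p') (g : PolyHom q q') (s : p.M) (t : q.M) :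
    zipM (mapM f s) (mapM g t) = mapM (tensorHom f g) (zipM s t) := by
  refine M.bisim (fun x y => ∃ s t, x = zipM (mapM f s) (mapM g t) ∧
    y = mapM (tensorHom f g) (zipM s t)) ?_ _ _ ⟨s, t, rfl, rfl⟩
  rintro x y ⟨s, t, rfl, rfl⟩
  refine ⟨(f.onPos (M.dest s).1, g.onPos (M.dest t).1),
    fun b => zipM (mapM f ((M.dest s).2 (f.onDir _ b.1))) (mapM g ((M.dest t).2 (g.onDir _ b.2))),
    fun b => mapM (tensorHom f g) (zipM ((M.dest s).2 (f.onDir _ b.1)) ((M.dest t).2 (g.onDir _ b.2))),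
    ?_, ?_, fun b => ⟨_, _, rfl, rfl⟩⟩
  · rw [dest_zipM, dest_mapM, dest_mapM] <;> rfl
  · rw [dest_mapM, dest_zipM] <;> rfl

theorem unitL (w : yPoly.{u}.M) (t : p.M) : mapM (tLunitHom p) (zipM w t) = t := by
  refine M.bisim (fun x y => ∃ w, x = mapM (tLunitHom p) (zipM w y)) ?_ _ _ ⟨w, rfl⟩
  rintro x y ⟨w, rfl⟩
  refine ⟨(M.dest y).1,
    fun b => mapM (tLunitHom p) (zipM ((M.dest w).2 PUnit.unit) ((M.dest y).2 b)),
    (M.dest y).2, ?_, rfl, fun b => ⟨_, rfl⟩⟩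
  rw [dest_mapM, dest_zipM] <;> rfl

theorem unitR (w : yPoly.{u}.M) (t : p.M) : mapM (tRunitHom p) (zipM t w) = t := by
  refine M.bisim (fun x y => ∃ w, x = mapM (tRunitHom p) (zipM y w)) ?_ _ _ ⟨w, rfl⟩
  rintro x y ⟨w, rfl⟩
  refine ⟨(M.dest y).1,
    fun b => mapM (tRunitHom p) (zipM ((M.dest y).2 b) ((M.dest w).2 PUnit.unit)),
    (M.dest y).2, ?_, rfl, fun b => ⟨_, rfl⟩⟩
  rw [dest_mapM, dest_zipM] <;> rfl

theorem assocZip (s : p.M) (t : q.M) (w : r.M) :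
    mapM (tAssocHom p q r) (zipM (zipM s t) w) = zipM s (zipM t w) := by
  refine M.bisim (fun x y => ∃ s t w, x = mapM (tAssocHom p q r) (zipM (zipM s t) w) ∧
    y = zipM s (zipM t w)) ?_ _ _ ⟨s, t, w, rfl, rfl⟩
  rintro x y ⟨s, t, w, rfl, rfl⟩
  refine ⟨((M.dest s).1, ((M.dest t).1, (M.dest w).1)),
    fun b => mapM (tAssocHom p q r)
      (zipM (zipM ((M.dest s).2 b.1) ((M.dest t).2 b.2.1)) ((M.dest w).2 b.2.2)),
    fun b => zipM ((M.dest s).2 b.1) (zipM ((M.dest t).2 b.2.1) ((M.dest w).2 b.2.2)),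
    ?_, ?_, fun b => ⟨_, _, _, rfl, rfl⟩⟩
  · rw [dest_mapM, dest_zipM, dest_zipM] <;> rfl
  · rw [dest_zipM, dest_zipM] <;> rfl

end CofreeLax

namespace CofreeLax
open PFunctor
variable {p q r p' q' : PFunctor.{u, u}}

theorem liftList_id {sM : p.M} {l : List (Σ a : p.A, p.B a)} (v : Valid p sM l) :
    ∀ t : p.M, sM = mapM (idHom p) t → liftList (idHom p) t l = l := by
  induction v with
  | nil => exact fun t _ => rfl
  | @cons sM a gg b l h v ih =>
    intro t ht; subst ht
    rw [dest_mapM] at h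
    dsimp only [idHom] at h
    obtain rfl : a = (M.dest t).1 := (congrArg Sigma.fst h).symm
    simp only [liftList, liftListGo]
    dsimp only [idHom]
    erw [dif_pos rfl, cast_eq]
    refine congrArg₂ _ rfl (ih _ ?_)
    exact ((objEq h b).trans (congrArg gg (cast_eq _ b))).symm

theorem liftList_comp (f : PolyHom p q) (g : PolyHom q r) (l : List (Σ a : r.A, r.B a)) :
    ∀ t : p.M, liftList (composePoly f g) t l = liftList f t (liftList g (mapM f t) l) := by
  induction l with
  | nil => exact fun t => rfl
  | cons x l ih =>
    obtain ⟨a, b⟩ := x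
    intro t
    simp only [liftList, liftListGo]
    rw [dest_mapM]
    dsimp only [composePoly]
    by_cases hc : g.onPos (f.onPos (M.dest t).1) = a
    · erw [dif_pos hc, dif_pos hc]
      simp only [liftListGo, dif_pos trivial, cast_eq]
      exact congrArg₂ _ rfl (ih _)
    · erw [dif_neg hc, dif_neg hc]
      rfl

theorem liftList_tensor (f : PolyHom p p') (g : PolyHom q q') {sM : (tensorPoly p' q').M}
    {l : List (Σ a : (tensorPoly p' q').A, (tensorPoly p' q').B a)}
    (v : Valid (tensorPoly p' q') sM l) :
    ∀ (s : p.M) (t : q.M), sM = mapM (tensorHom f g) (zipM s t) →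
      (liftList (tensorHom f g) (zipM s t) l).map (fun x => ⟨x.1.1, x.2.1⟩) =
        liftList f s (l.map fun x => ⟨x.1.1, x.2.1⟩) ∧
      (liftList (tensorHom f g) (zipM s t) l).map (fun x => ⟨x.1.2, x.2.2⟩) =
        liftList g t (l.map fun x => ⟨x.1.2, x.2.2⟩) := by
  induction v with
  | nil => exact fun s t _ => ⟨rfl, rfl⟩
  | @cons sM a gg b l h v ih =>
    intro s t ht; subst ht
    rw [dest_mapM, dest_zipM] at h
    dsimp only [tensorHom] at h
    obtain rfl : a = (f.onPos (M.dest s).1, g.onPos (M.dest t).1) :=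
      (congrArg Sigma.fst h).symm
    simp only [List.map_cons, liftList, liftListGo]
    rw [dest_zipM]
    dsimp only [tensorHom]
    erw [dif_pos rfl, cast_eq]; simp only [List.map_cons]
    have htail := ((objEq h b).trans (congrArg gg (cast_eq _ b))).symm
    refine ⟨congrArg₂ _ rfl (ih _ _ htail).1, congrArg₂ _ rfl (ih _ _ htail).2⟩

theorem liftList_lunit {sM : p.M} {l : List (Σ a : p.A, p.B a)} (v : Valid p sM l) :
    ∀ (w : yPoly.{u}.M) (t : p.M), sM = mapM (tLunitHom p) (zipM w t) →
      liftList (tLunitHom p) (zipM w t) l =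
        l.map (fun x => ⟨(PUnit.unit, x.1), (PUnit.unit, x.2)⟩) := by
  induction v with
  | nil => exact fun w t _ => rfl
  | @cons sM a gg b l h v ih =>
    intro w t ht; subst ht
    rw [dest_mapM, dest_zipM] at h
    dsimp only [tLunitHom] at h
    obtain rfl : a = (M.dest t).1 := (congrArg Sigma.fst h).symm
    simp only [List.map_cons, liftList, liftListGo]
    rw [dest_zipM]
    dsimp only [tLunitHom]
    erw [dif_pos rfl, cast_eq]
    have htail := ((objEq h b).trans (congrArg gg (cast_eq _ b))).symm
    exact congrArg₂ _ rfl (ih _ _ htail)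

theorem liftList_runit {sM : p.M} {l : List (Σ a : p.A, p.B a)} (v : Valid p sM l) :
    ∀ (t : p.M) (w : yPoly.{u}.M), sM = mapM (tRunitHom p) (zipM t w) →
      liftList (tRunitHom p) (zipM t w) l =
        l.map (fun x => ⟨(x.1, PUnit.unit), (x.2, PUnit.unit)⟩) := by
  induction v with
  | nil => exact fun t w _ => rfl
  | @cons sM a gg b l h v ih =>
    intro t w ht; subst ht
    rw [dest_mapM, dest_zipM] at h
    dsimp only [tRunitHom] at h
    obtain rfl : a = (M.dest t).1 := (congrArg Sigma.fst h).symm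
    simp only [List.map_cons, liftList, liftListGo]
    rw [dest_zipM]
    dsimp only [tRunitHom]
    erw [dif_pos rfl, cast_eq]
    have htail := ((objEq h b).trans (congrArg gg (cast_eq _ b))).symm
    exact congrArg₂ _ rfl (ih _ _ htail)

theorem liftList_assoc {sM : (tensorPoly p (tensorPoly q r)).M}
    {l : List (Σ a : (tensorPoly p (tensorPoly q r)).A, (tensorPoly p (tensorPoly q r)).B a)}
    (v : Valid (tensorPoly p (tensorPoly q r)) sM l) :
    ∀ (s : p.M) (t : q.M) (w : r.M), sM = mapM (tAssocHom p q r) (zipM (zipM s t) w) →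
      liftList (tAssocHom p q r) (zipM (zipM s t) w) l =
        l.map (fun x => ⟨((x.1.1, x.1.2.1), x.1.2.2), ((x.2.1, x.2.2.1), x.2.2.2)⟩) := by
  induction v with
  | nil => exact fun s t w _ => rfl
  | @cons sM a gg b l h v ih =>
    intro s t w ht; subst ht
    rw [dest_mapM, dest_zipM, dest_zipM] at h
    dsimp only [tAssocHom] at h
    obtain rfl : a = ((M.dest s).1, ((M.dest t).1, (M.dest w).1)) :=
      (congrArg Sigma.fst h).symm
    simp only [List.map_cons, liftList, liftListGo]
    rw [dest_zipM, dest_zipM]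
    dsimp only [tAssocHom]
    erw [dif_pos rfl, cast_eq]
    have htail := ((objEq h b).trans (congrArg gg (cast_eq _ b))).symm
    exact congrArg₂ _ rfl (ih _ _ _ htail)

end CofreeLax

open CofreeLax PFunctor

/-- The cofree comonad functor `c_-` is lax monoidal with respect to
the Dirichlet tensor `⊗` on `Poly`: there are natural maps `y → c_y` and
`c_p ⊗ c_q → c_{p⊗q}` satisfying the unitality and associativity axioms of a lax
monoidal functor.  (The functorial action of `c_-` on morphisms is characterized by
functoriality together with compatibility with the counits `c_p → p`.) -/
theorem cofree_laxMonoidal :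
    ∃ cmap : ∀ p q : PFunctor.{u, u}, PolyHom p q → PolyHom (cofreePoly p) (cofreePoly q),
      (∀ p, cmap p p (idHom p) = idHom (cofreePoly p)) ∧
      (∀ (p q r : PFunctor.{u, u}) (f : PolyHom p q) (g : PolyHom q r),
        cmap p r (composePoly f g) = composePoly (cmap p q f) (cmap q r g)) ∧
      (∀ (p q : PFunctor.{u, u}) (f : PolyHom p q),
        composePoly (cmap p q f) (cofreeCounit q) = composePoly (cofreeCounit p) f) ∧
      ∃ (u : PolyHom yPoly (cofreePoly yPoly.{u}))
        (L : ∀ p q : PFunctor.{u, u},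
          PolyHom (tensorPoly (cofreePoly p) (cofreePoly q)) (cofreePoly (tensorPoly p q))),
        (∀ (p p' q q' : PFunctor.{u, u}) (f : PolyHom p p') (g : PolyHom q q'),
          composePoly (tensorHom (cmap p p' f) (cmap q q' g)) (L p' q') =
            composePoly (L p q) (cmap _ _ (tensorHom f g))) ∧
        (∀ p : PFunctor.{u, u},
          composePoly (tensorHom u (idHom (cofreePoly p)))
              (composePoly (L yPoly p) (cmap _ _ (tLunitHom p))) =
            tLunitHom (cofreePoly p)) ∧
        (∀ p : PFunctor.{u, u},
          composePoly (tensorHom (idHom (cofreePoly p)) u)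
              (composePoly (L p yPoly) (cmap _ _ (tRunitHom p))) =
            tRunitHom (cofreePoly p)) ∧
        (∀ p q r : PFunctor.{u, u},
          composePoly (tensorHom (L p q) (idHom (cofreePoly r)))
              (composePoly (L (tensorPoly p q) r) (cmap _ _ (tAssocHom p q r))) =
            composePoly (tAssocHom (cofreePoly p) (cofreePoly q) (cofreePoly r))
              (composePoly (tensorHom (idHom (cofreePoly p)) (L q r))
                (L p (tensorPoly q r)))) := by
  refine ⟨fun p q f => ⟨mapM f, fun t d => liftPath f d t rfl⟩, ?_, ?_, ?_,
    ⟨fun _ => theTree, fun _ _ => PUnit.unit⟩,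
    fun p q => ⟨fun x => zipM x.1 x.2, fun x d => splitPath d x.1 x.2 rfl⟩,
    ?_, ?_, ?_, ?_⟩
  · -- identity
    intro p
    refine PolyHom.ext' mapM_id ?_
    intro t d d' hd
    change liftPath (idHom p) d t rfl = d'
    refine toList_inj ?_
    erw [toList_liftPath, liftList_id (toList_valid d) t rfl]
    exact toList_heq (mapM_id t) hd
  · -- composition
    intro p q r f g
    refine PolyHom.ext' (mapM_comp f g) ?_
    intro t d d' hd
    change liftPath (composePoly f g) d t rfl =
      liftPath f (liftPath g d' (mapM f t) rfl) t rfl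
    refine toList_inj ?_
    erw [toList_liftPath, toList_liftPath, toList_liftPath, liftList_comp,
      toList_heq (mapM_comp f g t) hd]
    rfl
  · -- counit compatibility
    intro p q f
    refine PolyHom.ext' (fun t => congrArg Sigma.fst (dest_mapM f t)) ?_
    intro t d d' hd
    change liftPath f (consPath (mapM f t) d (.nil _)) t rfl =
      consPath t (f.onDir _ d') (.nil _)
    refine toList_inj ?_
    erw [toList_liftPath, toList_consPath, toList_consPath]
    have hcond : f.onPos (M.dest t).1 = (M.dest (mapM f t)).1 := by erw [dest_mapM]
    simp only [toList, liftList, liftListGo]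
    rw [dif_pos hcond]
    rw [show cast (congrArg q.B hcond).symm d = d' from cast_eq_of_heq _ hd]
  · -- naturality of L
    intro p p' q q' f g
    refine PolyHom.ext' (fun x => zip_natural f g x.1 x.2) ?_
    intro x d d' hd
    have hdd : toList d = toList d' := toList_heq (zip_natural f g x.1 x.2) hd
    have hv := toList_valid d'
    change (liftPath f (splitPath d (mapM f x.1) (mapM g x.2) rfl).1 x.1 rfl,
        liftPath g (splitPath d (mapM f x.1) (mapM g x.2) rfl).2 x.2 rfl) =
      splitPath (liftPath (tensorHom f g) d' (zipM x.1 x.2) rfl) x.1 x.2 rfl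
    refine Prod.ext ?_ ?_
    · refine toList_inj ?_
      erw [toList_liftPath, (toList_splitPath d (mapM f x.1) (mapM g x.2) rfl).1, hdd,
        (toList_splitPath _ x.1 x.2 rfl).1, toList_liftPath,
        (liftList_tensor f g hv x.1 x.2 rfl).1]
    · refine toList_inj ?_
      erw [toList_liftPath, (toList_splitPath d (mapM f x.1) (mapM g x.2) rfl).2, hdd,
        (toList_splitPath _ x.1 x.2 rfl).2, toList_liftPath,
        (liftList_tensor f g hv x.1 x.2 rfl).2]
  · -- left unitor
    intro p
    refine PolyHom.ext' (fun x => unitL theTree x.2) ?_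
    intro x d d' hd
    change (PUnit.unit, (splitPath (liftPath (tLunitHom p) d (zipM theTree x.2) rfl)
        theTree x.2 rfl).2) = (PUnit.unit, d')
    refine Prod.ext rfl ?_
    refine toList_inj ?_
    erw [(toList_splitPath _ theTree x.2 rfl).2, toList_liftPath,
      liftList_lunit (toList_valid d) theTree x.2 rfl, List.map_map,
      toList_heq (unitL theTree x.2) hd]
    exact List.map_id' _
  · -- right unitor
    intro p
    refine PolyHom.ext' (fun x => unitR theTree x.1) ?_
    intro x d d' hd
    change ((splitPath (liftPath (tRunitHom p) d (zipM x.1 theTree) rfl)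
        x.1 theTree rfl).1, PUnit.unit) = (d', PUnit.unit)
    refine Prod.ext ?_ rfl
    refine toList_inj ?_
    erw [(toList_splitPath _ x.1 theTree rfl).1, toList_liftPath,
      liftList_runit (toList_valid d) x.1 theTree rfl, List.map_map,
      toList_heq (unitR theTree x.1) hd]
    exact List.map_id' _
  · -- associativity
    intro p q r
    refine PolyHom.ext' (fun x => assocZip x.1.1 x.1.2 x.2) ?_
    intro x d d' hd
    have hdd : toList d = toList d' := toList_heq (assocZip x.1.1 x.1.2 x.2) hd
    have hL := liftList_assoc (toList_valid d) x.1.1 x.1.2 x.2 rfl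
    change (splitPath (splitPath (liftPath (tAssocHom p q r) d
          (zipM (zipM x.1.1 x.1.2) x.2) rfl) (zipM x.1.1 x.1.2) x.2 rfl).1 x.1.1 x.1.2 rfl,
        (splitPath (liftPath (tAssocHom p q r) d (zipM (zipM x.1.1 x.1.2) x.2) rfl)
          (zipM x.1.1 x.1.2) x.2 rfl).2) =
      (((splitPath d' x.1.1 (zipM x.1.2 x.2) rfl).1,
        (splitPath (splitPath d' x.1.1 (zipM x.1.2 x.2) rfl).2 x.1.2 x.2 rfl).1),
        (splitPath (splitPath d' x.1.1 (zipM x.1.2 x.2) rfl).2 x.1.2 x.2 rfl).2)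
    refine Prod.ext (Prod.ext ?_ ?_) ?_
    · refine toList_inj ?_
      erw [(toList_splitPath _ x.1.1 x.1.2 rfl).1,
        (toList_splitPath _ (zipM x.1.1 x.1.2) x.2 rfl).1,
        toList_liftPath, hL, hdd, (toList_splitPath d' x.1.1 (zipM x.1.2 x.2) rfl).1,
        List.map_map, List.map_map]
      rfl
    · refine toList_inj ?_
      erw [(toList_splitPath _ x.1.1 x.1.2 rfl).2,
        (toList_splitPath _ (zipM x.1.1 x.1.2) x.2 rfl).1,
        toList_liftPath, hL, hdd,
        (toList_splitPath _ x.1.2 x.2 rfl).1,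
        (toList_splitPath d' x.1.1 (zipM x.1.2 x.2) rfl).2,
        List.map_map, List.map_map, List.map_map]
      rfl
    · refine toList_inj ?_
      erw [(toList_splitPath _ (zipM x.1.1 x.1.2) x.2 rfl).2,
        toList_liftPath, hL, hdd,
        (toList_splitPath _ x.1.2 x.2 rfl).2,
        (toList_splitPath d' x.1.1 (zipM x.1.2 x.2) rfl).2,
        List.map_map, List.map_map]
      rfl
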